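/- Let σ : ℤ → ℤ be a function. Suppose a is a positive integer with σ(i) = σ(i + a) for all i ∈ ℤ, and b is a positive integer such that Σ_{i=0}^{b} (−1)^i C(b, i) σ(N − i) = 0 for all N ∈ ℤ. Then σ(i) = σ(j) for all integers i and j. -/

import Mathlib

private lemma const_of_step (σ : ℤ → ℤ) (h : ∀ N : ℤ, σ N = σ (N - 1)) :
    ∀ i j : ℤ, σ i = σ j := by
  have key : ∀ n : ℤ, σ n = σ 0 := by
    intro n
    induction n using Int.induction_on with
    | zero => rfl
    | succ k ih => rw [h (k + 1)]; simpa using ih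
    | pred k ih =>
      have h2 := h (-(k : ℤ))
      rw [← h2]; exact ih
  intro i j; rw [key i, key j]

private lemma pascal_sum (σ : ℤ → ℤ) (m : ℕ) (N : ℤ) :
    ∑ i ∈ Finset.range (m + 2), (-1 : ℤ) ^ i * ((m + 1).choose i : ℤ) * σ (N - i)
      = (∑ i ∈ Finset.range (m + 1), (-1 : ℤ) ^ i * (m.choose i : ℤ) * σ (N - i))
        - ∑ i ∈ Finset.range (m + 1), (-1 : ℤ) ^ i * (m.choose i : ℤ) * σ (N - 1 - i) := by
  rw [Finset.sum_range_succ' (fun i => (-1 : ℤ) ^ i * ((m + 1).choose i : ℤ) * σ (N - i)) (m + 1)]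
  have hsplit : ∀ i ∈ Finset.range (m + 1),
      (-1 : ℤ) ^ (i + 1) * ((m + 1).choose (i + 1) : ℤ) * σ (N - (i + 1 : ℕ))
        = (-1) ^ (i + 1) * (m.choose (i + 1) : ℤ) * σ (N - (i + 1 : ℕ))
          - (-1) ^ i * (m.choose i : ℤ) * σ (N - 1 - i) := by
    intro i _
    rw [Nat.choose_succ_succ]
    push_cast
    have : (N - (↑i + 1 : ℤ)) = N - 1 - i := by ring
    rw [this]
    ring
  rw [Finset.sum_congr rfl hsplit, Finset.sum_sub_distrib]
  have hT : ∑ i ∈ Finset.range (m + 1),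
      (-1 : ℤ) ^ (i + 1) * (m.choose (i + 1) : ℤ) * σ (N - (i + 1 : ℕ))
      = (∑ i ∈ Finset.range (m + 1), (-1 : ℤ) ^ i * (m.choose i : ℤ) * σ (N - i))
        - σ N := by
    rw [Finset.sum_range_succ, Finset.sum_range_succ'
      (fun i => (-1 : ℤ) ^ i * (m.choose i : ℤ) * σ (N - i)) m]
    simp [Nat.choose_succ_self]
  rw [hT]
  simp
  ring

theorem stmt_1 (σ : ℤ → ℤ) (a : ℕ) (ha : 0 < a)
    (hper : ∀ i : ℤ, σ i = σ (i + a))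
    (b : ℕ) (hb : 0 < b)
    (hsum : ∀ N : ℤ, ∑ i ∈ Finset.range (b + 1),
      (-1 : ℤ) ^ i * (b.choose i : ℤ) * σ (N - i) = 0) :
    ∀ i j : ℤ, σ i = σ j := by
  have main : ∀ b : ℕ, 1 ≤ b → ∀ σ : ℤ → ℤ,
      (∀ i : ℤ, σ i = σ (i + a)) →
      (∀ N : ℤ, ∑ i ∈ Finset.range (b + 1),
        (-1 : ℤ) ^ i * (b.choose i : ℤ) * σ (N - i) = 0) →
      ∀ i j : ℤ, σ i = σ j := by
    intro b hb
    induction b, hb using Nat.le_induction with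
    | base =>
      intro σ hper hsum
      apply const_of_step
      intro N
      have h := hsum N
      simp [Finset.sum_range_succ] at h
      linarith
    | succ m hm ih =>
      intro σ hper hsum
      set τ : ℤ → ℤ := fun N => σ N - σ (N - 1) with hτ
      have hτper : ∀ i : ℤ, τ i = τ (i + a) := by
        intro i
        simp only [hτ]
        rw [hper i, hper (i - 1)]
        ring_nf
      have hτsum : ∀ N : ℤ, ∑ i ∈ Finset.range (m + 1),
          (-1 : ℤ) ^ i * (m.choose i : ℤ) * τ (N - i) = 0 := by
        intro N
        have hS := hsum N
        rw [show m + 1 + 1 = m + 2 from rfl, pascal_sum σ m N] at hS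
        have : ∑ i ∈ Finset.range (m + 1), (-1 : ℤ) ^ i * (m.choose i : ℤ) * τ (N - i)
            = (∑ i ∈ Finset.range (m + 1), (-1 : ℤ) ^ i * (m.choose i : ℤ) * σ (N - i))
              - ∑ i ∈ Finset.range (m + 1), (-1 : ℤ) ^ i * (m.choose i : ℤ) * σ (N - 1 - i) := by
          rw [← Finset.sum_sub_distrib]
          apply Finset.sum_congr rfl
          intro i _
          simp only [hτ]
          have : (N - (i : ℤ) - 1) = N - 1 - i := by ring
          rw [this]
          ring
        rw [this]
        exact hS
      have hc := ih τ hτper hτsum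
      have htel : ∑ i ∈ Finset.range a, ((fun k : ℕ => σ k) (i + 1) - (fun k : ℕ => σ k) i)
          = σ a - σ 0 := by
        rw [Finset.sum_range_sub (fun k : ℕ => σ k)]
        simp
      have hterm : ∀ i ∈ Finset.range a,
          ((fun k : ℕ => σ k) (i + 1) - (fun k : ℕ => σ k) i) = τ 1 := by
        intro i _
        have := hc ((i : ℤ) + 1) 1
        simp only [hτ] at this ⊢
        push_cast
        simpa using this
      rw [Finset.sum_congr rfl hterm, Finset.sum_const, Finset.card_range, nsmul_eq_mul] at htel
      have hσa : σ (a : ℤ) = σ 0 := by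
        have := hper 0
        simp at this
        exact this.symm
      rw [hσa, sub_self] at htel
      have hτ1 : τ 1 = 0 := by
        have : (a : ℤ) ≠ 0 := by exact_mod_cast ha.ne'
        exact (mul_eq_zero.mp htel).resolve_left this
      apply const_of_step
      intro N
      have := hc N 1
      rw [hτ1] at this
      simp only [hτ] at this
      linarith
  exact main b hb σ hper hsum
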